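/- Let X and Y be essentially incomparable Banach spaces, and let U : X → X and V : Y → Y be bounded operators that are matricially coupled, i.e., there is an invertible operator Û on X × Y whose (1,1) entry is U and whose inverse has (2,2) entry V. Then U and V are Fredholm operators. -/

import Mathlib

open ContinuousLinearMap

variable {X Y : Type*} [NormedAddCommGroup X] [NormedSpace ℂ X]
  [NormedAddCommGroup Y] [NormedSpace ℂ Y]

/-- A bounded operator is *Fredholm* if it has finite dimensional kernel and
closed range of finite codimension. -/
def IsFredholm (T : X →L[ℂ] Y) : Prop :=
  FiniteDimensional ℂ (LinearMap.ker (T : X →ₗ[ℂ] Y)) ∧ IsClosed (LinearMap.range (T : X →ₗ[ℂ] Y) : Set Y) ∧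
    FiniteDimensional ℂ (Y ⧸ LinearMap.range (T : X →ₗ[ℂ] Y))

/-- The Fredholm index `dim ker − dim coker`. -/
noncomputable def fredholmIndex (T : X →L[ℂ] Y) : ℤ :=
  (Module.finrank ℂ (LinearMap.ker (T : X →ₗ[ℂ] Y)) : ℤ) - (Module.finrank ℂ (Y ⧸ LinearMap.range (T : X →ₗ[ℂ] Y)) : ℤ)

/-- `S : X → Y` is *inessential* if `I_X − T S` is Fredholm for every bounded `T : Y → X`. -/
def Inessential (S : X →L[ℂ] Y) : Prop :=
  ∀ T : Y →L[ℂ] X, _root_.IsFredholm (ContinuousLinearMap.id ℂ X - T ∘L S)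

/-- Banach spaces `X`, `Y` are *essentially incomparable* if every bounded operator
`X → Y` is inessential. -/
def EssentiallyIncomparable (X Y : Type*) [NormedAddCommGroup X] [NormedSpace ℂ X]
    [NormedAddCommGroup Y] [NormedSpace ℂ Y] : Prop :=
  ∀ S : X →L[ℂ] Y, Inessential S

/-- `U` and `V` are *Schur coupled* if they arise as the two Schur complements of a
`2 × 2` block operator on `X × Y` with invertible diagonal entries. -/
def SchurCoupled (U : X →L[ℂ] X) (V : Y →L[ℂ] Y) : Prop :=
  ∃ (A : X ≃L[ℂ] X) (D : Y ≃L[ℂ] Y) (B : Y →L[ℂ] X) (C : X →L[ℂ] Y),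
    U = (A : X →L[ℂ] X) - B ∘L (D.symm : Y →L[ℂ] Y) ∘L C ∧
    V = (D : Y →L[ℂ] Y) - C ∘L (A.symm : X →L[ℂ] X) ∘L B

section FredAux

open ContinuousLinearMap

variable {E F G H : Type*} [NormedAddCommGroup E] [NormedSpace ℂ E]
  [NormedAddCommGroup F] [NormedSpace ℂ F]
  [NormedAddCommGroup G] [NormedSpace ℂ G]
  [NormedAddCommGroup H] [NormedSpace ℂ H]

/-- The continuous quotient map. -/
noncomputable def mkQL (p : Submodule ℂ E) : E →L[ℂ] E ⧸ p :=
  LinearMap.mkContinuous p.mkQ 1 (fun x => by simpa using Submodule.Quotient.norm_mk_le p x)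

@[simp] lemma mkQL_apply (p : Submodule ℂ E) (x : E) :
    mkQL p x = Submodule.Quotient.mk x := rfl

/-- A submodule containing a closed finite-codimensional submodule is closed and
has finite codimension. -/
lemma extend_closed_finiteCodim [CompleteSpace E] {p q : Submodule ℂ E} (hle : p ≤ q)
    (hc : IsClosed (p : Set E)) (hf : FiniteDimensional ℂ (E ⧸ p)) :
    IsClosed (q : Set E) ∧ FiniteDimensional ℂ (E ⧸ q) := by
  haveI : IsClosed (p : Set E) := hc
  haveI := hf
  constructor
  · have h2 : IsClosed ((q.map p.mkQ : Submodule ℂ (E ⧸ p)) : Set (E ⧸ p)) :=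
      Submodule.closed_of_finiteDimensional _
    have h3 : (q : Set E) = (mkQL p) ⁻¹' (q.map p.mkQ : Submodule ℂ (E ⧸ p)) := by
      ext x
      simp only [Set.mem_preimage, SetLike.mem_coe, Submodule.mem_map, mkQL_apply,
        Submodule.mkQ_apply]
      constructor
      · intro hx; exact ⟨x, hx, rfl⟩
      · rintro ⟨y, hy, hxy⟩
        have hxy' : y - x ∈ p := (Submodule.Quotient.eq p).mp hxy
        have : x = y - (y - x) := by abel
        rw [this]
        exact q.sub_mem hy (hle hxy')
    rw [h3]
    exact h2.preimage (mkQL p).continuous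
  · have hle' : p ≤ q.comap LinearMap.id := by simpa using hle
    refine FiniteDimensional.of_surjective (Submodule.mapQ p q LinearMap.id hle') ?_
    intro z
    obtain ⟨x, rfl⟩ := Submodule.Quotient.mk_surjective q z
    exact ⟨Submodule.Quotient.mk x, by simp [Submodule.mapQ_apply]⟩

lemma IsFredholm.equiv_comp (e : F ≃L[ℂ] G) {A : E →L[ℂ] F} (h : _root_.IsFredholm A) :
    _root_.IsFredholm ((e : F →L[ℂ] G) ∘L A) := by
  obtain ⟨h1, h2, h3⟩ := h
  refine ⟨?_, ?_, ?_⟩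
  · have hk : LinearMap.ker ((e : F →L[ℂ] G) ∘L A).toLinearMap = LinearMap.ker A.toLinearMap := by
      ext x
      simp [LinearMap.mem_ker]
    rw [hk]; exact h1
  · have hr : (LinearMap.range ((e : F →L[ℂ] G) ∘L A).toLinearMap : Set G)
        = ⇑e '' (LinearMap.range A.toLinearMap : Set F) := by
      ext z
      simp only [SetLike.mem_coe, LinearMap.mem_range, Set.mem_image,
        ContinuousLinearMap.coe_comp', Function.comp_apply, ContinuousLinearEquiv.coe_coe]
      constructor
      · rintro ⟨x, rfl⟩; exact ⟨A x, ⟨x, rfl⟩, rfl⟩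
      · rintro ⟨y, ⟨x, rfl⟩, rfl⟩; exact ⟨x, rfl⟩
    rw [hr]
    exact e.toHomeomorph.isClosedMap _ h2
  · have hker : LinearMap.range A.toLinearMap ≤
        LinearMap.ker ((LinearMap.range ((e : F →L[ℂ] G) ∘L A).toLinearMap).mkQ ∘ₗ (e : F →ₗ[ℂ] G)) := by
      rintro y ⟨x, rfl⟩
      simp only [LinearMap.mem_ker, LinearMap.comp_apply, Submodule.mkQ_apply,
        Submodule.Quotient.mk_eq_zero]
      exact ⟨x, rfl⟩
    refine FiniteDimensional.of_surjective
      (Submodule.liftQ (LinearMap.range A.toLinearMap)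
        ((LinearMap.range ((e : F →L[ℂ] G) ∘L A).toLinearMap).mkQ ∘ₗ (e : F →ₗ[ℂ] G)) hker) ?_
    intro z
    obtain ⟨w, rfl⟩ := Submodule.Quotient.mk_surjective _ z
    exact ⟨Submodule.Quotient.mk (e.symm w), by simp only [Submodule.liftQ_apply, LinearMap.comp_apply, Submodule.mkQ_apply, ContinuousLinearMap.coe_coe, ContinuousLinearEquiv.coe_coe, ContinuousLinearEquiv.apply_symm_apply]; exact congrArg _ (e.apply_symm_apply w)⟩

lemma IsFredholm.comp_equiv (e : G ≃L[ℂ] E) {A : E →L[ℂ] F} (h : _root_.IsFredholm A) :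
    _root_.IsFredholm (A ∘L (e : G →L[ℂ] E)) := by
  obtain ⟨h1, h2, h3⟩ := h
  haveI := h1
  have hr : LinearMap.range (A ∘L (e : G →L[ℂ] E)).toLinearMap = LinearMap.range A.toLinearMap := by
    ext z
    simp only [LinearMap.mem_range, ContinuousLinearMap.coe_comp', Function.comp_apply,
      ContinuousLinearEquiv.coe_coe]
    constructor
    · rintro ⟨x, rfl⟩; exact ⟨e x, rfl⟩
    · rintro ⟨x, rfl⟩; exact ⟨e.symm x, by simp⟩
  refine ⟨?_, ?_, ?_⟩
  · refine FiniteDimensional.of_injective (LinearMap.codRestrict (LinearMap.ker A.toLinearMap)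
      ((e : G →ₗ[ℂ] E).comp (LinearMap.ker (A ∘L (e : G →L[ℂ] E)).toLinearMap).subtype) ?_) ?_
    · rintro ⟨x, hx⟩
      exact hx
    · intro a b hab
      have := congrArg Subtype.val hab
      simp only [LinearMap.codRestrict_apply, LinearMap.comp_apply,
        Submodule.subtype_apply, ContinuousLinearEquiv.coe_coe] at this
      exact Subtype.ext (e.injective this)
  · rw [hr]; exact h2
  · rw [hr]; exact h3

lemma ker_prodMapL (A : E →L[ℂ] G) (B : F →L[ℂ] H) :
    LinearMap.ker (A.prodMap B).toLinearMap = (LinearMap.ker A.toLinearMap).prod (LinearMap.ker B.toLinearMap) := by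
  ext z
  simp [LinearMap.mem_ker, Submodule.mem_prod, Prod.ext_iff]

lemma range_prodMapL (A : E →L[ℂ] G) (B : F →L[ℂ] H) :
    LinearMap.range (A.prodMap B).toLinearMap = (LinearMap.range A.toLinearMap).prod (LinearMap.range B.toLinearMap) := by
  ext z
  simp only [LinearMap.mem_range, Submodule.mem_prod, Prod.ext_iff]
  constructor
  · rintro ⟨⟨a, b⟩, h⟩
    exact ⟨⟨a, by simpa using h.1⟩, ⟨b, by simpa using h.2⟩⟩
  · rintro ⟨⟨a, ha⟩, ⟨b, hb⟩⟩
    exact ⟨(a, b), by simp [ha, hb]⟩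

lemma findim_prod_submodule (p : Submodule ℂ E) (q : Submodule ℂ F)
    (hp : FiniteDimensional ℂ p) (hq : FiniteDimensional ℂ q) :
    FiniteDimensional ℂ (p.prod q) := by
  haveI := hp; haveI := hq
  have hle : p.prod q ≤ (p.map (LinearMap.inl ℂ E F)) ⊔ (q.map (LinearMap.inr ℂ E F)) := by
    rintro ⟨x, y⟩ hz
    rw [Submodule.mem_prod] at hz
    rw [Submodule.mem_sup]
    exact ⟨(x, 0), ⟨x, hz.1, rfl⟩, (0, y), ⟨y, hz.2, rfl⟩, by simp⟩
  exact Submodule.finiteDimensional_of_le hle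

lemma findim_quot_prod (p : Submodule ℂ E) (q : Submodule ℂ F)
    (hp : FiniteDimensional ℂ (E ⧸ p)) (hq : FiniteDimensional ℂ (F ⧸ q)) :
    FiniteDimensional ℂ ((E × F) ⧸ p.prod q) := by
  haveI := hp; haveI := hq
  have h1 : p ≤ LinearMap.ker ((p.prod q).mkQ ∘ₗ LinearMap.inl ℂ E F) := by
    intro x hx
    simp only [LinearMap.mem_ker, LinearMap.comp_apply, LinearMap.inl_apply,
      Submodule.mkQ_apply, Submodule.Quotient.mk_eq_zero]
    exact Submodule.mem_prod.mpr ⟨hx, q.zero_mem⟩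
  have h2 : q ≤ LinearMap.ker ((p.prod q).mkQ ∘ₗ LinearMap.inr ℂ E F) := by
    intro y hy
    simp only [LinearMap.mem_ker, LinearMap.comp_apply, LinearMap.inr_apply,
      Submodule.mkQ_apply, Submodule.Quotient.mk_eq_zero]
    exact Submodule.mem_prod.mpr ⟨p.zero_mem, hy⟩
  refine FiniteDimensional.of_surjective
    ((Submodule.liftQ p _ h1).coprod (Submodule.liftQ q _ h2)) ?_
  intro z
  obtain ⟨⟨x, y⟩, rfl⟩ := Submodule.Quotient.mk_surjective _ z
  refine ⟨(Submodule.Quotient.mk x, Submodule.Quotient.mk y), ?_⟩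
  simp only [LinearMap.coprod_apply, Submodule.liftQ_apply, LinearMap.comp_apply,
    LinearMap.inl_apply, LinearMap.inr_apply, Submodule.mkQ_apply]
  rw [← Submodule.Quotient.mk_add]
  simp

lemma IsFredholm.prodMap {A : E →L[ℂ] G} {B : F →L[ℂ] H}
    (hA : _root_.IsFredholm A) (hB : _root_.IsFredholm B) : _root_.IsFredholm (A.prodMap B) := by
  obtain ⟨a1, a2, a3⟩ := hA
  obtain ⟨b1, b2, b3⟩ := hB
  refine ⟨?_, ?_, ?_⟩
  · rw [ker_prodMapL]
    exact findim_prod_submodule _ _ a1 b1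
  · rw [range_prodMapL]
    exact (a2.prod b2 : IsClosed ((LinearMap.range A.toLinearMap : Set G) ×ˢ (LinearMap.range B.toLinearMap : Set H)))
  · rw [range_prodMapL]
    exact findim_quot_prod _ _ a3 b3

lemma IsFredholm.of_prodMap_right {A : E →L[ℂ] G} {B : F →L[ℂ] H}
    (h : _root_.IsFredholm (A.prodMap B)) : _root_.IsFredholm B := by
  obtain ⟨h1, h2, h3⟩ := h
  rw [ker_prodMapL] at h1
  rw [range_prodMapL] at h2 h3
  haveI := h1
  haveI := h3
  refine ⟨?_, ?_, ?_⟩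
  · have hle : (⊥ : Submodule ℂ E).prod (LinearMap.ker B.toLinearMap) ≤
        (LinearMap.ker A.toLinearMap).prod (LinearMap.ker B.toLinearMap) :=
      Submodule.prod_mono bot_le le_rfl
    haveI := Submodule.finiteDimensional_of_le hle
    refine FiniteDimensional.of_injective (LinearMap.codRestrict
      ((⊥ : Submodule ℂ E).prod (LinearMap.ker B.toLinearMap))
      ((LinearMap.inr ℂ E F).comp (LinearMap.ker B.toLinearMap).subtype) ?_) ?_
    · rintro ⟨y, hy⟩
      exact Submodule.mem_prod.mpr ⟨Submodule.mem_bot ℂ |>.mpr rfl, hy⟩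
    · intro a b hab
      have := congrArg Subtype.val hab
      simp only [LinearMap.codRestrict_apply, LinearMap.comp_apply, Submodule.subtype_apply,
        LinearMap.inr_apply, Prod.mk.injEq] at this
      exact Subtype.ext this.2
  · have hset : (LinearMap.range B.toLinearMap : Set H)
        = (fun y => ((0 : G), y)) ⁻¹' (((LinearMap.range A.toLinearMap).prod (LinearMap.range B.toLinearMap)
            : Submodule ℂ (G × H)) : Set (G × H)) := by
      ext y
      simp [Submodule.mem_prod]
    rw [hset]
    exact h2.preimage (continuous_const.prodMk continuous_id)
  · have hker : (LinearMap.range A.toLinearMap).prod (LinearMap.range B.toLinearMap) ≤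
        LinearMap.ker ((LinearMap.range B.toLinearMap).mkQ ∘ₗ LinearMap.snd ℂ G H) := by
      rintro ⟨u, v⟩ huv
      rw [Submodule.mem_prod] at huv
      simp only [LinearMap.mem_ker, LinearMap.comp_apply, LinearMap.snd_apply,
        Submodule.mkQ_apply, Submodule.Quotient.mk_eq_zero]
      exact huv.2
    refine FiniteDimensional.of_surjective (Submodule.liftQ _ _ hker) ?_
    intro z
    obtain ⟨v, rfl⟩ := Submodule.Quotient.mk_surjective _ z
    exact ⟨Submodule.Quotient.mk ((0 : G), v), by simp⟩

lemma isFredholm_id : _root_.IsFredholm (ContinuousLinearMap.id ℂ E) := by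
  have hk : LinearMap.ker (ContinuousLinearMap.id ℂ E).toLinearMap = ⊥ := by
    ext x; simp [LinearMap.mem_ker]
  have hr : LinearMap.range (ContinuousLinearMap.id ℂ E).toLinearMap = ⊤ := by
    ext x; simp [LinearMap.mem_range]
  refine ⟨?_, ?_, ?_⟩
  · rw [hk]; infer_instance
  · rw [hr, Submodule.top_coe]; exact isClosed_univ
  · rw [hr]
    haveI : Subsingleton (E ⧸ (⊤ : Submodule ℂ E)) :=
      Submodule.Quotient.subsingleton_iff.mpr rfl
    exact FiniteDimensional.of_rank_eq_zero (by simp [rank_subsingleton'])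

/-- Upper unipotent block operator `[[I, t],[0, I]]` as an equivalence. -/
noncomputable def upE (t : F →L[ℂ] E) : (E × F) ≃L[ℂ] (E × F) :=
  ContinuousLinearEquiv.equivOfInverse
    (ContinuousLinearMap.id ℂ (E × F) + (inl ℂ E F) ∘L t ∘L (snd ℂ E F))
    (ContinuousLinearMap.id ℂ (E × F) - (inl ℂ E F) ∘L t ∘L (snd ℂ E F))
    (fun z => by simp [Prod.ext_iff]) (fun z => by simp [Prod.ext_iff])

/-- Lower unipotent block operator `[[I, 0],[s, I]]` as an equivalence. -/
noncomputable def lowE (s : E →L[ℂ] F) : (E × F) ≃L[ℂ] (E × F) :=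
  ContinuousLinearEquiv.equivOfInverse
    (ContinuousLinearMap.id ℂ (E × F) + (inr ℂ E F) ∘L s ∘L (fst ℂ E F))
    (ContinuousLinearMap.id ℂ (E × F) - (inr ℂ E F) ∘L s ∘L (fst ℂ E F))
    (fun z => by simp [Prod.ext_iff]) (fun z => by simp [Prod.ext_iff])

@[simp] lemma upE_apply (t : F →L[ℂ] E) (z : E × F) : upE t z = (z.1 + t z.2, z.2) := by
  simp [upE, Prod.ext_iff]

@[simp] lemma lowE_apply (s : E →L[ℂ] F) (z : E × F) : lowE s z = (z.1, z.2 + s z.1) := by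
  simp [lowE, Prod.ext_iff]

/-- If `I - T S` is Fredholm then so is `I - S T`. -/
lemma isFredholm_flip (S : E →L[ℂ] F) (T : F →L[ℂ] E)
    (h : _root_.IsFredholm (ContinuousLinearMap.id ℂ E - T ∘L S)) :
    _root_.IsFredholm (ContinuousLinearMap.id ℂ F - S ∘L T) := by
  have hd : _root_.IsFredholm ((ContinuousLinearMap.id ℂ E - T ∘L S).prodMap
      (ContinuousLinearMap.id ℂ F)) := h.prodMap isFredholm_id
  have hc : _root_.IsFredholm
      ((((upE T).trans (lowE (-S)) : (E × F) ≃L[ℂ] (E × F)) : (E × F) →L[ℂ] (E × F)) ∘L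
        (((ContinuousLinearMap.id ℂ E - T ∘L S).prodMap (ContinuousLinearMap.id ℂ F)) ∘L
          (((upE (-T)).trans (lowE S) : (E × F) ≃L[ℂ] (E × F)) : (E × F) →L[ℂ] (E × F)))) :=
    (hd.comp_equiv _).equiv_comp _
  have heq : (ContinuousLinearMap.id ℂ E).prodMap (ContinuousLinearMap.id ℂ F - S ∘L T) =
      (((upE T).trans (lowE (-S)) : (E × F) ≃L[ℂ] (E × F)) : (E × F) →L[ℂ] (E × F)) ∘L
        (((ContinuousLinearMap.id ℂ E - T ∘L S).prodMap (ContinuousLinearMap.id ℂ F)) ∘L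
          (((upE (-T)).trans (lowE S) : (E × F) ≃L[ℂ] (E × F)) : (E × F) →L[ℂ] (E × F))) := by
    apply ContinuousLinearMap.ext
    intro z
    apply Prod.ext <;>
      simp [ContinuousLinearEquiv.trans_apply, map_sub, map_add, map_neg] <;> abel
  rw [← heq] at hc
  exact hc.of_prodMap_right

/-- If `U P` and `P U` are Fredholm then `U` is Fredholm. -/
lemma isFredholm_of_comp [CompleteSpace F] {U : E →L[ℂ] F} {P : F →L[ℂ] E}
    (h1 : _root_.IsFredholm (U ∘L P)) (h2 : _root_.IsFredholm (P ∘L U)) : _root_.IsFredholm U := by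
  have hk : LinearMap.ker U.toLinearMap ≤ LinearMap.ker (P ∘L U).toLinearMap := by
    intro x hx
    rw [LinearMap.mem_ker] at hx ⊢
    simp [ContinuousLinearMap.comp_apply, show U x = 0 from hx]
  have hrange : LinearMap.range (U ∘L P).toLinearMap ≤ LinearMap.range U.toLinearMap := by
    rintro y ⟨x, rfl⟩
    exact ⟨P x, rfl⟩
  haveI := h2.1
  obtain ⟨hcl, hcod⟩ := extend_closed_finiteCodim hrange h1.2.1 h1.2.2
  exact ⟨Submodule.finiteDimensional_of_le hk, hcl, hcod⟩

end FredAux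

theorem matriciallyCoupled_fredholm
    {X Y : Type*} [NormedAddCommGroup X] [NormedSpace ℂ X] [CompleteSpace X]
    [NormedAddCommGroup Y] [NormedSpace ℂ Y] [CompleteSpace Y]
    (hXY : EssentiallyIncomparable X Y)
    (U : X →L[ℂ] X) (V : Y →L[ℂ] Y)
    (Uhat : (X × Y) ≃L[ℂ] (X × Y))
    (hU : (ContinuousLinearMap.fst ℂ X Y) ∘L (Uhat : (X × Y) →L[ℂ] (X × Y)) ∘L
      (ContinuousLinearMap.inl ℂ X Y) = U)
    (hV : (ContinuousLinearMap.snd ℂ X Y) ∘L (Uhat.symm : (X × Y) →L[ℂ] (X × Y)) ∘L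
      (ContinuousLinearMap.inr ℂ X Y) = V) :
    _root_.IsFredholm U ∧ _root_.IsFredholm V := by
  classical
  set W : (X × Y) ≃L[ℂ] (X × Y) := Uhat.symm
  set B : Y →L[ℂ] X := (fst ℂ X Y) ∘L (Uhat : (X × Y) →L[ℂ] (X × Y)) ∘L (inr ℂ X Y)
  set C : X →L[ℂ] Y := (snd ℂ X Y) ∘L (Uhat : (X × Y) →L[ℂ] (X × Y)) ∘L (inl ℂ X Y)
  set D : Y →L[ℂ] Y := (snd ℂ X Y) ∘L (Uhat : (X × Y) →L[ℂ] (X × Y)) ∘L (inr ℂ X Y)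
  set P : X →L[ℂ] X := (fst ℂ X Y) ∘L (W : (X × Y) →L[ℂ] (X × Y)) ∘L (inl ℂ X Y)
  set Q : Y →L[ℂ] X := (fst ℂ X Y) ∘L (W : (X × Y) →L[ℂ] (X × Y)) ∘L (inr ℂ X Y)
  set R : X →L[ℂ] Y := (snd ℂ X Y) ∘L (W : (X × Y) →L[ℂ] (X × Y)) ∘L (inl ℂ X Y)
  have hUhat : ∀ z : X × Y, Uhat z = (U z.1 + B z.2, C z.1 + D z.2) := by
    intro z
    have hz : z = (z.1, (0 : Y)) + ((0 : X), z.2) := by simp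
    have h1 : Uhat (z.1, (0 : Y)) = (U z.1, C z.1) := by
      apply Prod.ext
      · rw [← hU]; rfl
      · rfl
    have h2 : Uhat (((0 : X), z.2)) = (B z.2, D z.2) := by
      apply Prod.ext <;> rfl
    rw [hz, map_add, h1, h2]
    simp [Prod.ext_iff]
  have hW : ∀ z : X × Y, W z = (P z.1 + Q z.2, R z.1 + V z.2) := by
    intro z
    have hz : z = (z.1, (0 : Y)) + ((0 : X), z.2) := by simp
    have h1 : W (z.1, (0 : Y)) = (P z.1, R z.1) := by
      apply Prod.ext <;> rfl
    have h2 : W (((0 : X), z.2)) = (Q z.2, V z.2) := by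
      apply Prod.ext
      · rfl
      · rw [← hV]; rfl
    rw [hz, map_add, h1, h2]
    simp [Prod.ext_iff]
  -- the four basic identities
  have i1 : ContinuousLinearMap.id ℂ X - U ∘L P = B ∘L R := by
    ext x
    have h0 : Uhat (W (x, (0 : Y))) = (x, (0 : Y)) := Uhat.apply_symm_apply _
    rw [hW, hUhat] at h0
    simp only [map_zero, add_zero] at h0
    have hfst := congrArg Prod.fst h0
    simp only at hfst
    simp only [ContinuousLinearMap.sub_apply, ContinuousLinearMap.comp_apply,
      ContinuousLinearMap.id_apply]
    exact sub_eq_of_eq_add' hfst.symm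
  have i2 : ContinuousLinearMap.id ℂ X - P ∘L U = Q ∘L C := by
    ext x
    have h0 : W (Uhat (x, (0 : Y))) = (x, (0 : Y)) := Uhat.symm_apply_apply _
    rw [hUhat, hW] at h0
    simp only [map_zero, add_zero] at h0
    have hfst := congrArg Prod.fst h0
    simp only at hfst
    simp only [ContinuousLinearMap.sub_apply, ContinuousLinearMap.comp_apply,
      ContinuousLinearMap.id_apply]
    exact sub_eq_of_eq_add' hfst.symm
  have i3 : ContinuousLinearMap.id ℂ Y - V ∘L D = R ∘L B := by
    ext y
    have h0 : W (Uhat ((0 : X), y)) = ((0 : X), y) := Uhat.symm_apply_apply _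
    rw [hUhat, hW] at h0
    simp only [map_zero, zero_add] at h0
    have hsnd := congrArg Prod.snd h0
    simp only at hsnd
    simp only [ContinuousLinearMap.sub_apply, ContinuousLinearMap.comp_apply,
      ContinuousLinearMap.id_apply]
    exact sub_eq_of_eq_add hsnd.symm
  have i4 : ContinuousLinearMap.id ℂ Y - D ∘L V = C ∘L Q := by
    ext y
    have h0 : Uhat (W ((0 : X), y)) = ((0 : X), y) := Uhat.apply_symm_apply _
    rw [hW, hUhat] at h0
    simp only [map_zero, zero_add] at h0
    have hsnd := congrArg Prod.snd h0
    simp only at hsnd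
    simp only [ContinuousLinearMap.sub_apply, ContinuousLinearMap.comp_apply,
      ContinuousLinearMap.id_apply]
    exact sub_eq_of_eq_add hsnd.symm
  -- Fredholmness of the four products
  have fUP : _root_.IsFredholm (U ∘L P) := by
    have h := hXY R B
    have hEq : U ∘L P = ContinuousLinearMap.id ℂ X - B ∘L R := by
      rw [← i1]; abel
    rw [hEq]; exact h
  have fPU : _root_.IsFredholm (P ∘L U) := by
    have h := hXY C Q
    have hEq : P ∘L U = ContinuousLinearMap.id ℂ X - Q ∘L C := by
      rw [← i2]; abel
    rw [hEq]; exact h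
  have fVD : _root_.IsFredholm (V ∘L D) := by
    have h := isFredholm_flip R B (hXY R B)
    have hEq : V ∘L D = ContinuousLinearMap.id ℂ Y - R ∘L B := by
      rw [← i3]; abel
    rw [hEq]; exact h
  have fDV : _root_.IsFredholm (D ∘L V) := by
    have h := isFredholm_flip C Q (hXY C Q)
    have hEq : D ∘L V = ContinuousLinearMap.id ℂ Y - C ∘L Q := by
      rw [← i4]; abel
    rw [hEq]; exact h
  exact ⟨isFredholm_of_comp fUP fPU, isFredholm_of_comp fVD fDV⟩
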